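/- In the number field model, for every finite-index subgroup H ≤ ℤ^r there exists a constant C > 0 such that for every i ∈ I there is n ∈ H with 0 < λ_i(n) ≤ C and λ_j(n) < 0 for all j ∈ I with j ≠ i. -/

import Mathlib

noncomputable section

/-- The ambient space `ℝ^{r₁} ⊕ ℂ^{r₂}`. -/
abbrev Amb (r₁ r₂ : ℕ) : Type := (Fin r₁ → ℝ) × (Fin r₂ → ℂ)

/-- The multiplicative action of `θ ∈ K` on the ambient space, acting on the `i`-th
coordinate by multiplication by `σ_i(θ)`. -/
def mulK {K : Type} [Field K] {r₁ r₂ : ℕ} (σR : Fin r₁ → (K →+* ℝ))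
    (σC : Fin r₂ → (K →+* ℂ)) (θ : K) (x : Amb r₁ r₂) : Amb r₁ r₂ :=
  (fun i => σR i θ * x.1 i, fun j => σC j θ * x.2 j)

/-- The embedding `σ : K → ℝ^{r₁} ⊕ ℂ^{r₂}`. -/
def embK {K : Type} [Field K] {r₁ r₂ : ℕ} (σR : Fin r₁ → (K →+* ℝ))
    (σC : Fin r₂ → (K →+* ℂ)) (θ : K) : Amb r₁ r₂ :=
  (fun i => σR i θ, fun j => σC j θ)

/-- The image in `K` of a unit of the ring of integers. -/
def unitToK {K : Type} [Field K] [NumberField K] (u : (NumberField.RingOfIntegers K)ˣ) : K :=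
  algebraMap (NumberField.RingOfIntegers K) K (u : NumberField.RingOfIntegers K)

/-- The pairing `⟨ξ,x⟩ = Σ ξᵢxᵢ + Σ 2 Re(ξⱼxⱼ)` on the ambient space. -/
def pairAmb {r₁ r₂ : ℕ} (ξ x : Amb r₁ r₂) : ℝ :=
  (∑ i, ξ.1 i * x.1 i) + ∑ j, 2 * (ξ.2 j * x.2 j).re

/-- `σ(𝒪_K)`, as an additive subgroup of the ambient space. -/
def ringLat {K : Type} [Field K] [NumberField K] {r₁ r₂ : ℕ} (σR : Fin r₁ → (K →+* ℝ))
    (σC : Fin r₂ → (K →+* ℂ)) : AddSubgroup (Amb r₁ r₂) :=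
  AddSubgroup.closure
    (Set.range fun a : NumberField.RingOfIntegers K =>
      embK σR σC (algebraMap (NumberField.RingOfIntegers K) K a))

/-- The dual lattice `X̂` of `X = (ℝ^{r₁}⊕ℂ^{r₂})/Γ`. -/
def hatX {r₁ r₂ : ℕ} (Γ : AddSubgroup (Amb r₁ r₂)) : Set (Amb r₁ r₂) :=
  {ξ | ∀ γ ∈ Γ, ∃ m : ℤ, pairAmb ξ γ = (m : ℝ)}

/-- `(X̂²)^κ` for `κ ∈ K ∪ {∞}`, where `∞` is encoded as `none`. -/
def hatSq {K : Type} [Field K] {r₁ r₂ : ℕ} (σR : Fin r₁ → (K →+* ℝ))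
    (σC : Fin r₂ → (K →+* ℂ)) (Γ : AddSubgroup (Amb r₁ r₂)) :
    Option K → Set (Amb r₁ r₂ × Amb r₁ r₂)
  | some κ => {ξ | ξ.1 ∈ hatX Γ ∧ ξ.2 ∈ hatX Γ ∧ ξ.1 + mulK σR σC κ ξ.2 = 0}
  | none => {ξ | ξ.1 ∈ hatX Γ ∧ ξ.2 = 0}

/-- The subtorus `T^κ ⊆ X²`, defined as the annihilator of `(X̂²)^κ`. -/
def Tk {K : Type} [Field K] {r₁ r₂ : ℕ} (σR : Fin r₁ → (K →+* ℝ))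
    (σC : Fin r₂ → (K →+* ℂ)) (Γ : AddSubgroup (Amb r₁ r₂)) (κ : Option K) :
    Set ((Amb r₁ r₂ × Amb r₁ r₂) ⧸ Γ.prod Γ) :=
  {x | ∃ x' : Amb r₁ r₂ × Amb r₁ r₂,
    (QuotientAddGroup.mk x' : (Amb r₁ r₂ × Amb r₁ r₂) ⧸ Γ.prod Γ) = x ∧
    ∀ ξ ∈ hatSq σR σC Γ κ, ∃ m : ℤ, pairAmb ξ.1 x'.1 + pairAmb ξ.2 x'.2 = (m : ℝ)}

/-- The diagonal multiplicative action of `θ ∈ K` on `(ℝ^{r₁}⊕ℂ^{r₂})²`. -/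
def mulKsq {K : Type} [Field K] {r₁ r₂ : ℕ} (σR : Fin r₁ → (K →+* ℝ))
    (σC : Fin r₂ → (K →+* ℂ)) (θ : K) (x : Amb r₁ r₂ × Amb r₁ r₂) :
    Amb r₁ r₂ × Amb r₁ r₂ :=
  (mulK σR σC θ x.1, mulK σR σC θ x.2)

/-- The complex-valued `i`-th embedding, for `i` in the index set `I = Fin r₁ ⊕ Fin r₂`. -/
def embC {K : Type} [Field K] {r₁ r₂ : ℕ} (σR : Fin r₁ → (K →+* ℝ))
    (σC : Fin r₂ → (K →+* ℂ)) : Fin r₁ ⊕ Fin r₂ → K → ℂ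
  | Sum.inl i => fun θ => (σR i θ : ℂ)
  | Sum.inr j => fun θ => σC j θ

/-- `λ_i(n) = log |σ_i(ζ^n)|`. -/
def lam {K : Type} [Field K] [NumberField K] {r r₁ r₂ : ℕ} (σR : Fin r₁ → (K →+* ℝ))
    (σC : Fin r₂ → (K →+* ℂ)) (ζ : (Fin r → ℤ) → (NumberField.RingOfIntegers K)ˣ)
    (i : Fin r₁ ⊕ Fin r₂) (n : Fin r → ℤ) : ℝ :=
  Real.log (‖embC σR σC i (unitToK (ζ n))‖)

/-- The subspace `V^κ` of `(ℝ^{r₁}⊕ℂ^{r₂})²`, for `κ ∈ K ∪ {∞}`. -/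
def Vk {K : Type} [Field K] {r₁ r₂ : ℕ} (σR : Fin r₁ → (K →+* ℝ))
    (σC : Fin r₂ → (K →+* ℂ)) : Option K → Set (Amb r₁ r₂ × Amb r₁ r₂)
  | some κ => {v | v.2 = mulK σR σC κ v.1}
  | none => {v | v.1 = 0}

/-- The coordinate subspace `V_i` of `ℝ^{r₁}⊕ℂ^{r₂}`. -/
def Vslice (r₁ r₂ : ℕ) : Fin r₁ ⊕ Fin r₂ → Set (Amb r₁ r₂)
  | Sum.inl i => {x | (∀ i', i' ≠ i → x.1 i' = 0) ∧ x.2 = 0}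
  | Sum.inr j => {x | x.1 = 0 ∧ ∀ j', j' ≠ j → x.2 j' = 0}

/-- `V_i^□ = V_i ⊕ V_i ⊆ (ℝ^{r₁}⊕ℂ^{r₂})²`. -/
def VsliceSq (r₁ r₂ : ℕ) (i : Fin r₁ ⊕ Fin r₂) : Set (Amb r₁ r₂ × Amb r₁ r₂) :=
  {v | v.1 ∈ Vslice r₁ r₂ i ∧ v.2 ∈ Vslice r₁ r₂ i}

/-- The image of a subset of `X²` under `ζ_Δ^n`. -/
def setAct {K : Type} [Field K] [NumberField K] {r r₁ r₂ : ℕ} (σR : Fin r₁ → (K →+* ℝ))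
    (σC : Fin r₂ → (K →+* ℂ)) (Γ : AddSubgroup (Amb r₁ r₂))
    (ζ : (Fin r → ℤ) → (NumberField.RingOfIntegers K)ˣ) (n : Fin r → ℤ)
    (S : Set ((Amb r₁ r₂ × Amb r₁ r₂) ⧸ Γ.prod Γ)) :
    Set ((Amb r₁ r₂ × Amb r₁ r₂) ⧸ Γ.prod Γ) :=
  {y | ∃ x' : Amb r₁ r₂ × Amb r₁ r₂,
    (QuotientAddGroup.mk x' : (Amb r₁ r₂ × Amb r₁ r₂) ⧸ Γ.prod Γ) ∈ S ∧
    y = QuotientAddGroup.mk (mulKsq σR σC (unitToK (ζ n)) x')}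

/-- A `d`-dimensional homogeneous `ζ_Δ`-invariant subset
`L = {ζ_Δ^n·z' : n ∈ ℤ^r, z' ∈ z + T^κ}`. -/
def homogSet {K : Type} [Field K] [NumberField K] {r r₁ r₂ : ℕ} (σR : Fin r₁ → (K →+* ℝ))
    (σC : Fin r₂ → (K →+* ℂ)) (Γ : AddSubgroup (Amb r₁ r₂))
    (ζ : (Fin r → ℤ) → (NumberField.RingOfIntegers K)ˣ)
    (z : (Amb r₁ r₂ × Amb r₁ r₂) ⧸ Γ.prod Γ) (κ : Option K) :
    Set ((Amb r₁ r₂ × Amb r₁ r₂) ⧸ Γ.prod Γ) :=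
  {y | ∃ (n : Fin r → ℤ) (x' : Amb r₁ r₂ × Amb r₁ r₂),
    (QuotientAddGroup.mk x' : (Amb r₁ r₂ × Amb r₁ r₂) ⧸ Γ.prod Γ) ∈ (z + ·) '' Tk σR σC Γ κ ∧
    y = QuotientAddGroup.mk (mulKsq σR σC (unitToK (ζ n)) x')}


theorem exists_expanding_one_direction
    {K : Type} [Field K] [NumberField K] (r r₁ r₂ d : ℕ)
    (hr : r + 1 = r₁ + r₂) (hr2 : 2 ≤ r)
    (hd : Module.finrank ℚ K = d) (hd2 : r₁ + 2 * r₂ = d)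
    (σR : Fin r₁ → (K →+* ℝ)) (σC : Fin r₂ → (K →+* ℂ))
    (hσR : Function.Injective σR) (hσC : Function.Injective σC)
    (hσCconj : ∀ j j' : Fin r₂, (starRingEnd ℂ).comp (σC j) ≠ σC j')
    (hCM : ¬(r₁ = 0 ∧ ∃ F : IntermediateField ℚ K, Module.finrank F K = 2 ∧
        ∀ φ : F →+* ℂ, ∀ x : F, (φ x).im = 0))
    (ζ : (Fin r → ℤ) → (NumberField.RingOfIntegers K)ˣ)
    (hζhom : ∀ m n, ζ (m + n) = ζ m * ζ n)
    (hζinj : Function.Injective ζ)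
    (hζfin : (Subgroup.closure (Set.range ζ)).index ≠ 0)
    :
    ∀ H : AddSubgroup (Fin r → ℤ), H.index ≠ 0 →
      ∃ C : ℝ, 0 < C ∧ ∀ i : Fin r₁ ⊕ Fin r₂, ∃ n ∈ H,
        0 < lam σR σC ζ i n ∧ lam σR σC ζ i n ≤ C ∧
        ∀ j : Fin r₁ ⊕ Fin r₂, j ≠ i → lam σR σC ζ j n < 0
    := by
  intro H hH
  classical
  -- The complex embeddings indexed by `Fin r₁ ⊕ Fin r₂`.
  set φ : Fin r₁ ⊕ Fin r₂ → (K →+* ℂ) :=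
    Sum.elim (fun i => (Complex.ofRealHom : ℝ →+* ℂ).comp (σR i)) σC with hφdef
  set w : Fin r₁ ⊕ Fin r₂ → NumberField.InfinitePlace K :=
    fun i => NumberField.InfinitePlace.mk (φ i) with hwdef
  have hφR : ∀ i : Fin r₁,
      NumberField.ComplexEmbedding.conjugate (φ (Sum.inl i)) = φ (Sum.inl i) := by
    intro i
    ext x
    simp [φ, NumberField.ComplexEmbedding.conjugate_coe_eq]
  have hconjC : ∀ j j' : Fin r₂,
      NumberField.ComplexEmbedding.conjugate (σC j) ≠ σC j' := by
    intro j j' h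
    exact hσCconj j j' (by ext x; exact DFunLike.congr_fun h x)
  have hwinj : Function.Injective w := by
    intro a b hab
    rcases NumberField.InfinitePlace.mk_eq_iff.mp hab with h | h
    · match a, b with
      | Sum.inl i, Sum.inl i' =>
          have : σR i = σR i' := by
            ext x
            have := DFunLike.congr_fun h x
            simpa [φ, Complex.ofReal_inj] using this
          rw [hσR this]
      | Sum.inl i, Sum.inr j' =>
          exfalso
          apply hσCconj j' j'
          ext x
          have hx := (DFunLike.congr_fun h x).symm
          simp only [φ, Sum.elim_inl, Sum.elim_inr, RingHom.comp_apply,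
            Complex.ofRealHom_eq_coe] at hx
          simp [hx, RingHom.comp_apply]
      | Sum.inr j, Sum.inl i' =>
          exfalso
          apply hσCconj j j
          ext x
          have hx := DFunLike.congr_fun h x
          simp only [φ, Sum.elim_inl, Sum.elim_inr, RingHom.comp_apply,
            Complex.ofRealHom_eq_coe] at hx
          simp [hx, RingHom.comp_apply]
      | Sum.inr j, Sum.inr j' =>
          have : σC j = σC j' := h
          rw [hσC this]
    · match a, b with
      | Sum.inl i, Sum.inl i' =>
          rw [hφR i] at h
          have : σR i = σR i' := by
            ext x
            have := DFunLike.congr_fun h x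
            simpa [φ, Complex.ofReal_inj] using this
          rw [hσR this]
      | Sum.inl i, Sum.inr j' =>
          exfalso
          rw [hφR i] at h
          apply hσCconj j' j'
          ext x
          have hx := (DFunLike.congr_fun h x).symm
          simp only [φ, Sum.elim_inl, Sum.elim_inr, RingHom.comp_apply,
            Complex.ofRealHom_eq_coe] at hx
          simp [hx, RingHom.comp_apply]
      | Sum.inr j, Sum.inl i' =>
          exfalso
          apply hσCconj j j
          have hcc : NumberField.ComplexEmbedding.conjugate
              (NumberField.ComplexEmbedding.conjugate (σC j)) = σC j := by
            ext x
            simp [NumberField.ComplexEmbedding.conjugate_coe_eq]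
          ext x
          have hx := DFunLike.congr_fun h x
          simp only [φ, Sum.elim_inl, Sum.elim_inr, RingHom.comp_apply,
            Complex.ofRealHom_eq_coe, NumberField.ComplexEmbedding.conjugate_coe_eq] at hx
          have : σC j x = (starRingEnd ℂ) ((σR i' x : ℝ) : ℂ) := by
            rw [← hx]; simp
          simp [RingHom.comp_apply, this, Complex.conj_conj]
      | Sum.inr j, Sum.inr j' =>
          exact absurd h (hconjC j j')
  -- `lam` in terms of places
  have hlam : ∀ (i : Fin r₁ ⊕ Fin r₂) (n : Fin r → ℤ),
      lam σR σC ζ i n = Real.log (w i (unitToK (ζ n))) := by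
    intro i n
    cases i <;> rfl
  -- `ζ` sends `0` to `1` and `nsmul` to `pow`
  have hζ0 : ζ 0 = 1 := by
    have h := hζhom 0 0
    rw [add_zero] at h
    exact (left_eq_mul.mp h)
  have hpow : ∀ (k : ℕ) (n : Fin r → ℤ), ζ (k • n) = ζ n ^ k := by
    intro k
    induction k with
    | zero => intro n; simpa using hζ0
    | succ k ih =>
        intro n
        rw [succ_nsmul, hζhom, ih, pow_succ]
  -- range of `ζ` is a subgroup
  let ζ' : Multiplicative (Fin r → ℤ) →* (NumberField.RingOfIntegers K)ˣ :=
    MonoidHom.mk' (fun m => ζ m.toAdd) (fun a b => hζhom _ _)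
  have hset : Set.range ζ = (ζ'.range : Set (NumberField.RingOfIntegers K)ˣ) := by
    ext x
    exact ⟨fun ⟨n, hn⟩ => ⟨n, hn⟩, fun ⟨n, hn⟩ => ⟨n, hn⟩⟩
  have hcl : Subgroup.closure (Set.range ζ) = ζ'.range := by
    rw [hset, Subgroup.closure_eq]
  set k : ℕ := (Subgroup.closure (Set.range ζ)).index with hkdef
  have hk : k ≠ 0 := hζfin
  have he : H.index ≠ 0 := hH
  -- the key claim
  have key : ∀ i : Fin r₁ ⊕ Fin r₂, ∃ n ∈ H,
      0 < lam σR σC ζ i n ∧ ∀ j, j ≠ i → lam σR σC ζ j n < 0 := by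
    intro i
    obtain ⟨u, hu⟩ := NumberField.Units.dirichletUnitTheorem.exists_unit K (w i)
    set x : K := unitToK u with hxdef
    have hx0 : x ≠ 0 := by
      simpa [x, unitToK] using NumberField.RingOfIntegers.coe_ne_zero u
    -- the sum of `mult * log` over all places is zero
    have hsum : ∑ v : NumberField.InfinitePlace K,
        (NumberField.InfinitePlace.mult v : ℝ) * Real.log (v x) = 0 := by
      have hprod := NumberField.InfinitePlace.prod_eq_abs_norm x
      have hn1 : |(Algebra.norm ℚ) x| = 1 := NumberField.Units.norm K u
      rw [hn1, Rat.cast_one] at hprod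
      have hlog := congrArg Real.log hprod
      rw [Real.log_one, Real.log_prod (fun v _ => by
        exact pow_ne_zero _ (ne_of_gt (NumberField.InfinitePlace.pos_iff.mpr hx0)))] at hlog
      simpa [Real.log_pow] using hlog
    -- positivity at `w i`
    have hne : ∃ i' : Fin r₁ ⊕ Fin r₂, i' ≠ i := by
      refine Fintype.exists_ne_of_one_lt_card ?_ i
      rw [Fintype.card_sum, Fintype.card_fin, Fintype.card_fin, ← hr]
      omega
    obtain ⟨i', hi'⟩ := hne
    have hwne : w i' ≠ w i := fun hcon => hi' (hwinj hcon)
    have herase : (Finset.univ.erase (w i)).Nonempty :=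
      ⟨w i', Finset.mem_erase.mpr ⟨hwne, Finset.mem_univ _⟩⟩
    have hneg : ∑ v ∈ Finset.univ.erase (w i),
        (NumberField.InfinitePlace.mult v : ℝ) * Real.log (v x) < 0 := by
      have : ∑ v ∈ Finset.univ.erase (w i),
          (NumberField.InfinitePlace.mult v : ℝ) * Real.log (v x)
          < ∑ v ∈ Finset.univ.erase (w i), (0 : ℝ) := by
        refine Finset.sum_lt_sum_of_nonempty herase ?_
        intro v hv
        have hvne : v ≠ w i := (Finset.mem_erase.mp hv).1
        have hlt := hu v hvne
        have hmpos : (0 : ℝ) < (NumberField.InfinitePlace.mult v : ℝ) := by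
          exact_mod_cast NumberField.InfinitePlace.mult_pos
        exact mul_neg_of_pos_of_neg hmpos hlt
      simpa using this
    have hsplit : (NumberField.InfinitePlace.mult (w i) : ℝ) * Real.log (w i x)
        + ∑ v ∈ Finset.univ.erase (w i),
          (NumberField.InfinitePlace.mult v : ℝ) * Real.log (v x)
        = ∑ v : NumberField.InfinitePlace K,
          (NumberField.InfinitePlace.mult v : ℝ) * Real.log (v x) :=
      Finset.add_sum_erase Finset.univ
        (fun v => (NumberField.InfinitePlace.mult v : ℝ) * Real.log (v x))
        (Finset.mem_univ (w i))
    have hipos : 0 < Real.log (w i x) := by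
      have hmpos : (0 : ℝ) < (NumberField.InfinitePlace.mult (w i) : ℝ) := by
        exact_mod_cast NumberField.InfinitePlace.mult_pos
      nlinarith [hsum, hneg, hsplit]
    -- get `n₀` with `ζ n₀ = u ^ k`
    have hmem : u ^ k ∈ Subgroup.closure (Set.range ζ) :=
      Subgroup.pow_index_mem _ u
    rw [hcl] at hmem
    obtain ⟨m, hm⟩ := hmem
    set n₀ : Fin r → ℤ := m.toAdd with hn₀def
    have hζn₀ : ζ n₀ = u ^ k := hm
    refine ⟨H.index • n₀, AddSubgroup.nsmul_index_mem H n₀, ?_, ?_⟩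
    · rw [hlam]
      have : ζ (H.index • n₀) = u ^ (k * H.index) := by
        rw [hpow, hζn₀, ← pow_mul]
      rw [this]
      have hcoe : unitToK (u ^ (k * H.index)) = x ^ (k * H.index) := by
        simp [unitToK, x, map_pow]
      rw [hcoe, map_pow, Real.log_pow]
      have : (0 : ℝ) < (k * H.index : ℕ) := by
        have : k * H.index ≠ 0 := by
          simp [Nat.mul_eq_zero, hk, he]
        exact_mod_cast Nat.pos_of_ne_zero this
      exact mul_pos this hipos
    · intro j hj
      rw [hlam]
      have : ζ (H.index • n₀) = u ^ (k * H.index) := by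
        rw [hpow, hζn₀, ← pow_mul]
      rw [this]
      have hcoe : unitToK (u ^ (k * H.index)) = x ^ (k * H.index) := by
        simp [unitToK, x, map_pow]
      rw [hcoe, map_pow, Real.log_pow]
      have hjw : w j ≠ w i := fun hcon => hj (hwinj hcon)
      have hlt := hu (w j) hjw
      have hpos' : (0 : ℝ) < (k * H.index : ℕ) := by
        have : k * H.index ≠ 0 := by
          simp [Nat.mul_eq_zero, hk, he]
        exact_mod_cast Nat.pos_of_ne_zero this
      exact mul_neg_of_pos_of_neg hpos' hlt
  -- now extract `C`
  choose nf hmemf hposf hnegf using key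
  refine ⟨1 + ∑ i : Fin r₁ ⊕ Fin r₂, max (lam σR σC ζ i (nf i)) 0, ?_, ?_⟩
  · have : (0 : ℝ) ≤ ∑ i : Fin r₁ ⊕ Fin r₂, max (lam σR σC ζ i (nf i)) 0 :=
      Finset.sum_nonneg (fun i _ => le_max_right _ _)
    linarith
  · intro i
    refine ⟨nf i, hmemf i, hposf i, ?_, hnegf i⟩
    have h1 : lam σR σC ζ i (nf i) ≤ max (lam σR σC ζ i (nf i)) 0 := le_max_left _ _
    have h2 : max (lam σR σC ζ i (nf i)) 0
        ≤ ∑ j : Fin r₁ ⊕ Fin r₂, max (lam σR σC ζ j (nf j)) 0 :=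
      Finset.single_le_sum (f := fun j => max (lam σR σC ζ j (nf j)) 0)
        (fun j _ => le_max_right _ _) (Finset.mem_univ i)
    linarith


end
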